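/- Let S be a group-bound inverse semigroup and x, y ∈ S. Then the following conditions are equivalent: (a) x ∼ y; (b) x ≈ y; (c) there exists z ∈ S such that z = a·x = b·y for some a, b ∈ S¹. -/

import Mathlib

namespace SgConjPaper

/-- `spow x n = x^(n+1)`: positive powers of an element of a semigroup. -/
def spow {S : Type*} [Semigroup S] (x : S) : ℕ → S
  | 0 => x
  | n + 1 => spow x n * x

/-- `a` lies in the maximal subgroup of `S` whose identity is the idempotent
`e` (i.e. `e` is a two-sided identity for `a` and `a` is invertible over `e`). -/
def InMaxSubgroup {S : Type*} [Semigroup S] (e a : S) : Prop :=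
  e * a = a ∧ a * e = a ∧ ∃ b : S, e * b = b ∧ b * e = b ∧ a * b = e ∧ b * a = e

/-- `e` is the idempotent `e_x`: the identity of the maximal subgroup
containing some positive power of `x`. -/
def IsEIdem {S : Type*} [Semigroup S] (x e : S) : Prop :=
  ∃ k : ℕ, InMaxSubgroup e (spow x k)

/-- A semigroup is group-bound if some positive power of every element lies
in a subgroup. -/
def GroupBound (S : Type*) [Semigroup S] : Prop := ∀ x : S, ∃ e : S, IsEIdem x e

/-- Primary conjugacy: `x = uv`, `y = vu` for some `u, v ∈ S¹`. -/
def PrimConj {S : Type*} [Semigroup S] (x y : S) : Prop :=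
  ∃ u v : WithOne S, (x : WithOne S) = u * v ∧ (y : WithOne S) = v * u

/-- Conjugacy `∼`: the transitive closure of primary conjugacy. -/
def SgConj {S : Type*} [Semigroup S] : S → S → Prop := Relation.TransGen PrimConj

/-- Conjugacy in the character sense `≡`: equal traces under every
finite-dimensional complex representation. -/
def CharEq {S : Type*} [Semigroup S] (x y : S) : Prop :=
  ∀ (V : Type) (_ : AddCommGroup V) (_ : Module ℂ V) (_ : FiniteDimensional ℂ V)
    (φ : S →ₙ* Module.End ℂ V),
    LinearMap.trace ℂ V (φ x) = LinearMap.trace ℂ V (φ y)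

/-- A semigroup is regular if for every `a` there is `b` with `a = aba`. -/
def Regular (S : Type*) [Semigroup S] : Prop := ∀ a : S, ∃ b : S, a * b * a = a

/-- `inv` makes `S` an inverse semigroup: `inv a` is the unique inverse of
each element `a`. -/
def IsInverseSemigroup (S : Type*) [Semigroup S] (inv : S → S) : Prop :=
  (∀ a : S, a * inv a * a = a) ∧ (∀ a : S, inv a * a * inv a = inv a) ∧
  (∀ a b : S, a * b * a = a → b * a * b = b → b = inv a)

open Classical in
/-- Extension of the inverse map to `S¹ = WithOne S` (with `1⁻¹ = 1`). -/
noncomputable def inv₁ {S : Type*} [Semigroup S] (inv : S → S) (a : WithOne S) :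
    WithOne S :=
  if h : a = 1 then 1 else ((inv (WithOne.unone h) : S) : WithOne S)

/-- The natural partial order on `S¹`: `a ≥ b` iff `b = a e` for some
idempotent `e`. -/
def NatGe {S : Type*} [Semigroup S] (a b : WithOne S) : Prop :=
  ∃ f : WithOne S, f * f = f ∧ b = a * f

/-- The partial action of `S¹` on `S`: `ActsTo inv a x y` says that `a · x` is
defined (i.e. `a⁻¹ a ≥ e_x`) and that its value `a x a⁻¹` equals `y`. -/
def ActsTo {S : Type*} [Semigroup S] (inv : S → S) (a : WithOne S) (x y : S) : Prop :=
  (∃ e : S, IsEIdem x e ∧ NatGe (inv₁ inv a * a) (e : WithOne S)) ∧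
  (y : WithOne S) = a * (x : WithOne S) * inv₁ inv a

/-- `x ≈_p y`: `y = a · x` or `x = a · y` for some `a ∈ S¹`. -/
def ActConjP {S : Type*} [Semigroup S] (inv : S → S) (x y : S) : Prop :=
  ∃ a : WithOne S, ActsTo inv a x y ∨ ActsTo inv a y x

/-- `≈`, conjugacy in the action sense: the transitive closure of `≈_p`. -/
def ActConj {S : Type*} [Semigroup S] (inv : S → S) : S → S → Prop :=
  Relation.TransGen (ActConjP inv)

section Abstract

variable {M : Type*} [Monoid M] {J : M → M}

/-- `s` lies in the maximal subgroup with identity `e`. -/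
def MaxGrp (e s : M) : Prop :=
  e * s = s ∧ s * e = s ∧ ∃ t : M, e * t = t ∧ t * e = t ∧ s * t = e ∧ t * s = e

theorem mg_idem {e s : M} (h : MaxGrp e s) : e * e = e := by
  obtain ⟨hes, -, t, -, -, hst, -⟩ := h
  calc e * e = e * (s * t) := by rw [hst]
  _ = (e * s) * t := by rw [mul_assoc]
  _ = e := by rw [hes, hst]

theorem inv_unique (hJ : IsInverseSemigroup M J) {a b : M}
    (h1 : a * b * a = a) (h2 : b * a * b = b) : b = J a := hJ.2.2 a b h1 h2

theorem j_invol (hJ : IsInverseSemigroup M J) (a : M) : J (J a) = a :=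
  (inv_unique hJ (hJ.2.1 a) (hJ.1 a)).symm

theorem j_idem (hJ : IsInverseSemigroup M J) {e : M} (he : e * e = e) : J e = e :=
  (inv_unique hJ (by rw [he, he]) (by rw [he, he])).symm

theorem idem_aJa (hJ : IsInverseSemigroup M J) (a : M) :
    (a * J a) * (a * J a) = a * J a := by
  rw [← mul_assoc, hJ.1]

theorem idem_Jaa (hJ : IsInverseSemigroup M J) (a : M) :
    (J a * a) * (J a * a) = J a * a := by
  rw [← mul_assoc, hJ.2.1]

theorem idem_mul (hJ : IsInverseSemigroup M J) {e f : M} (he : e * e = e) (hf : f * f = f) :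
    (e * f) * (e * f) = e * f := by
  set x := J (e * f) with hx
  have h1 : (e * f) * x * (e * f) = e * f := hJ.1 _
  have h2 : x * (e * f) * x = x := hJ.2.1 _
  have hez : ∀ z : M, e * (e * z) = e * z := fun z => by rw [← mul_assoc, he]
  have hfz : ∀ z : M, f * (f * z) = f * z := fun z => by rw [← mul_assoc, hf]
  have h2z : ∀ z : M, x * (e * (f * (x * z))) = x * z := fun z => by
    have := congrArg (fun w => w * z) h2
    simpa only [mul_assoc] using this
  have hg : f * x * e = x := by
    apply inv_unique hJ
    · show (e * f) * (f * x * e) * (e * f) = e * f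
      have h1' := h1
      simp only [mul_assoc] at h1' ⊢
      rw [hfz, hez]
      exact h1'
    · show (f * x * e) * (e * f) * (f * x * e) = f * x * e
      simp only [mul_assoc]
      rw [hez, hfz]
      rw [show x * (e * (f * (x * e))) = x * e from h2z e]
  have hxe : x * e = x := by
    rw [← hg]
    simp only [mul_assoc]
    rw [he]
  have hfx : f * x = x := by
    rw [← hg]
    simp only [mul_assoc]
    rw [hfz]
  have hxx : x * x = x := by
    calc x * x = (x * e) * (f * x) := by rw [hxe, hfx]
    _ = x * (e * f) * x := by simp only [mul_assoc]
    _ = x := h2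
  have hefx : e * f = x := by
    have h3 : e * f = J x := inv_unique hJ h2 h1
    rw [h3, j_idem hJ hxx]
  rw [hefx]; exact hxx

theorem idem_comm (hJ : IsInverseSemigroup M J) {e f : M} (he : e * e = e) (hf : f * f = f) :
    e * f = f * e := by
  have hef := idem_mul hJ he hf
  have hfe := idem_mul hJ hf he
  have hez : ∀ z : M, e * (e * z) = e * z := fun z => by rw [← mul_assoc, he]
  have hfz : ∀ z : M, f * (f * z) = f * z := fun z => by rw [← mul_assoc, hf]
  have h1 : (e * f) * (f * e) * (e * f) = e * f := by
    have := hef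
    simp only [mul_assoc] at this ⊢
    rw [hfz, hez]
    exact this
  have h2 : (f * e) * (e * f) * (f * e) = f * e := by
    have := hfe
    simp only [mul_assoc] at this ⊢
    rw [hez, hfz]
    exact this
  have : f * e = J (e * f) := inv_unique hJ h1 h2
  rw [this, j_idem hJ hef]

theorem j_mul (hJ : IsInverseSemigroup M J) (a b : M) : J (a * b) = J b * J a := by
  have hcomm : (b * J b) * (J a * a) = (J a * a) * (b * J b) :=
    idem_comm hJ (idem_aJa hJ b) (idem_Jaa hJ a)
  refine (inv_unique hJ ?_ ?_).symm
  · calc (a * b) * (J b * J a) * (a * b)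
        = a * ((b * J b) * (J a * a)) * b := by simp only [mul_assoc]
    _ = a * ((J a * a) * (b * J b)) * b := by rw [hcomm]
    _ = (a * J a * a) * (b * J b * b) := by simp only [mul_assoc]
    _ = a * b := by rw [hJ.1, hJ.1]
  · calc (J b * J a) * (a * b) * (J b * J a)
        = J b * ((J a * a) * (b * J b)) * J a := by simp only [mul_assoc]
    _ = J b * ((b * J b) * (J a * a)) * J a := by rw [← hcomm]
    _ = (J b * b * J b) * (J a * a * J a) := by simp only [mul_assoc]
    _ = J b * J a := by rw [hJ.2.1, hJ.2.1]

theorem j_one (hJ : IsInverseSemigroup M J) : J (1 : M) = 1 :=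
  j_idem hJ (mul_one 1)

theorem j_pow (hJ : IsInverseSemigroup M J) (a : M) (n : ℕ) : J (a ^ n) = (J a) ^ n := by
  induction n with
  | zero => simpa using j_one hJ
  | succ n ih => rw [pow_succ, j_mul hJ, ih, pow_succ']


theorem mg_comm {e s x : M} (h : MaxGrp e s) (hsx : s * x = x * s) : e * x = x * e := by
  obtain ⟨hes, hse, t, het, hte, hst, hts⟩ := h
  have h1 : e * x * e = x * e := by
    calc e * x * e = s * t * x * (s * t) := by rw [hst]
    _ = s * t * (x * s) * t := by simp only [mul_assoc]
    _ = s * t * (s * x) * t := by rw [hsx]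
    _ = s * (t * s) * (x * t) := by simp only [mul_assoc]
    _ = s * e * (x * t) := by rw [hts]
    _ = s * (x * t) := by rw [hse]
    _ = (s * x) * t := by rw [mul_assoc]
    _ = (x * s) * t := by rw [hsx]
    _ = x * e := by rw [mul_assoc, hst]
  have h2 : e * x * e = e * x := by
    calc e * x * e = t * s * x * (s * t) := by rw [hts, hst]
    _ = t * (s * x) * (s * t) := by simp only [mul_assoc]
    _ = t * (x * s) * (s * t) := by rw [hsx]
    _ = t * x * (s * (s * t)) := by simp only [mul_assoc]
    _ = t * x * s := by rw [hst, hse]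
    _ = t * (s * x) := by rw [mul_assoc, hsx]
    _ = e * x := by rw [← mul_assoc, hts]
  rw [← h2, h1]

theorem mg_mul {e s s' : M} (h : MaxGrp e s) (h' : MaxGrp e s') : MaxGrp e (s * s') := by
  obtain ⟨hes, hse, t, het, hte, hst, hts⟩ := h
  obtain ⟨hes', hse', t', het', hte', hst', hts'⟩ := h'
  refine ⟨by rw [← mul_assoc, hes], by rw [mul_assoc, hse'], t' * t, ?_, ?_, ?_, ?_⟩
  · rw [← mul_assoc, het']
  · rw [mul_assoc, hte]
  · calc s * s' * (t' * t) = s * (s' * t') * t := by simp only [mul_assoc]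
    _ = (s * e) * t := by rw [hst']
    _ = e := by rw [hse, hst]
  · calc t' * t * (s * s') = t' * (t * s) * s' := by simp only [mul_assoc]
    _ = (t' * e) * s' := by rw [hts]
    _ = e := by rw [hte', hts']

theorem mg_pow_xe {x e : M} {K : ℕ} (hK : 1 ≤ K)
    (h : MaxGrp e (x ^ K)) : MaxGrp e (x * e) := by
  obtain ⟨k, rfl⟩ : ∃ k, K = k + 1 := ⟨K - 1, (Nat.succ_pred_eq_of_pos hK).symm⟩
  have hxx : x ^ (k + 1) * x = x * x ^ (k + 1) := by rw [← pow_succ, ← pow_succ']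
  have hex : e * x = x * e := mg_comm h hxx
  obtain ⟨hes, hse, t, het, hte, hst, hts⟩ := h
  have hee : e * e = e := mg_idem ⟨hes, hse, t, het, hte, hst, hts⟩
  -- (†) : t * (x * e) = e * x * t
  have hdag : t * x * e = e * x * t := by
    calc t * x * e = t * x * (x ^ (k+1) * t) := by rw [hst]
    _ = t * (x * x ^ (k+1)) * t := by simp only [mul_assoc]
    _ = t * (x ^ (k+1) * x) * t := by rw [hxx]
    _ = (t * x ^ (k+1)) * (x * t) := by simp only [mul_assoc]
    _ = e * x * t := by rw [hts, mul_assoc]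
  -- powers of x*e :  (x*e)^(j+1) = x^(j+1) * e
  have hpow : ∀ j : ℕ, (x * e) ^ (j + 1) = x ^ (j + 1) * e := by
    intro j
    induction j with
    | zero => simp
    | succ j ih =>
      calc (x * e) ^ (j + 2) = (x * e) ^ (j + 1) * (x * e) := by rw [pow_succ]
      _ = x ^ (j+1) * e * (x * e) := by rw [ih]
      _ = x ^ (j+1) * (e * x) * e := by simp only [mul_assoc]
      _ = x ^ (j+1) * (x * e) * e := by rw [hex]
      _ = (x ^ (j+1) * x) * (e * e) := by simp only [mul_assoc]
      _ = x ^ (j+2) * e := by rw [← pow_succ, hee]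
  have hxeK : (x * e) ^ k * (x * e) = x ^ (k + 1) * e := by
    rw [← pow_succ, hpow]
  refine ⟨?_, ?_, (x * e) ^ k * t, ?_, ?_, ?_, ?_⟩
  · rw [← mul_assoc, hex, mul_assoc, hee]
  · rw [mul_assoc, hee]
  · -- e * ((x*e)^k * t) = (x*e)^k * t
    cases k with
    | zero => simpa using het
    | succ j =>
      have hexe : e * (x * e) = x * e := by rw [← mul_assoc, hex, mul_assoc, hee]
      calc e * ((x*e)^(j+1) * t) = (e * (x * e)) * ((x*e)^j * t) := by
            simp only [pow_succ', mul_assoc]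
      _ = (x * e) * ((x*e)^j * t) := by rw [hexe]
      _ = (x*e)^(j+1) * t := by simp only [pow_succ', mul_assoc]
  · rw [mul_assoc, hte]
  · -- (x*e) * ((x*e)^k * t) = e
    calc x * e * ((x*e)^k * t) = ((x*e) * (x*e)^k) * t := by simp only [mul_assoc]
    _ = ((x*e)^k * (x*e)) * t := by rw [← pow_succ, ← pow_succ']
    _ = x ^ (k+1) * e * t := by rw [hxeK]
    _ = x ^ (k+1) * t := by rw [mul_assoc, het]
    _ = e := hst
  · -- ((x*e)^k * t) * (x*e) = e
    calc (x*e)^k * t * (x * e) = (x*e)^k * (t * x * e) := by simp only [mul_assoc]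
    _ = (x*e)^k * (e * x * t) := by rw [hdag]
    _ = (x*e)^k * (x * e * t) := by rw [hex]
    _ = ((x*e)^k * (x * e)) * t := by simp only [mul_assoc]
    _ = x ^ (k+1) * e * t := by rw [hxeK]
    _ = e := by rw [mul_assoc, het, hst]

theorem mg_x_pows {x e : M} {K : ℕ} (hK : 1 ≤ K)
    (h : MaxGrp e (x ^ K)) : ∀ m, K ≤ m → MaxGrp e (x ^ m) := by
  have hxe := mg_pow_xe hK h
  intro m hm
  induction m, hm using Nat.le_induction with
  | base => exact h
  | succ m hm ih =>
    have h1 : x ^ m * (x * e) = x ^ (m+1) * e := by rw [← mul_assoc, ← pow_succ]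
    have h2 : x ^ (m+1) * e = x ^ (m+1) := by
      rw [pow_succ', mul_assoc, ih.2.1]
    rw [show x ^ (m+1) = x ^ m * (x * e) from (h1.trans h2).symm]
    exact mg_mul ih hxe
theorem pow_comm_self (x : M) (K : ℕ) : x ^ K * x = x * x ^ K := by
  rw [← pow_succ, ← pow_succ']

theorem eid_unique_abs (hJ : IsInverseSemigroup M J) {x e e' : M} {K K' : ℕ}
    (hK : 1 ≤ K) (hK' : 1 ≤ K')
    (h : MaxGrp e (x ^ K)) (h' : MaxGrp e' (x ^ K')) : e = e' := by
  have hm : MaxGrp e (x ^ (K + K')) := mg_x_pows hK h _ (Nat.le_add_right _ _)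
  have hm' : MaxGrp e' (x ^ (K + K')) := mg_x_pows hK' h' _ (Nat.le_add_left _ _)
  obtain ⟨hes, hse, t, het, hte, hst, hts⟩ := hm
  obtain ⟨hes', hse', t', het', hte', hst', hts'⟩ := hm'
  have h1 : e * e' = e' := by
    calc e * e' = e * (x ^ (K+K') * t') := by rw [hst']
    _ = (e * x ^ (K+K')) * t' := by rw [← mul_assoc]
    _ = e' := by rw [hes, hst']
  have h2 : e' * e = e := by
    calc e' * e = e' * (x ^ (K+K') * t) := by rw [hst]
    _ = (e' * x ^ (K+K')) * t := by rw [← mul_assoc]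
    _ = e := by rw [hes', hst]
  have h3 : e * e' = e' * e :=
    idem_comm hJ (mg_idem ⟨hes, hse, t, het, hte, hst, hts⟩)
      (mg_idem ⟨hes', hse', t', het', hte', hst', hts'⟩)
  rw [← h2, ← h3, h1]

theorem lemB (hJ : IsInverseSemigroup M J) {x h e : M} {K : ℕ} (hK : 1 ≤ K)
    (hmg : MaxGrp e (x ^ K)) (hh : h * h = h) (heh : e * h = e) :
    (x * h) ^ K = x ^ K := by
  obtain ⟨k, rfl⟩ : ∃ k, K = k + 1 := ⟨K - 1, (Nat.succ_pred_eq_of_pos hK).symm⟩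
  have hex : e * x = x * e := mg_comm hmg (pow_comm_self x (k+1))
  have hee : e * e = e := mg_idem hmg
  have hse : x ^ (k+1) * e = x ^ (k+1) := hmg.2.1
  obtain ⟨t, het, hte, hst, hts⟩ := hmg.2.2
  have hv1 : x * (J x * x) = x := by rw [← mul_assoc, hJ.1]
  have heJxx : e * (J x * x) = e := by
    calc e * (J x * x) = t * x ^ (k+1) * (J x * x) := by rw [hts]
    _ = t * (x ^ k * (x * (J x * x))) := by simp only [pow_succ, mul_assoc]
    _ = t * (x ^ k * x) := by rw [hv1]
    _ = t * x ^ (k+1) := by rw [← pow_succ]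
    _ = e := hts
  have hJe : J e = e := j_idem hJ hee
  have hexJ : e * J x = J x * e := by
    have h0 := congrArg J hex
    rw [j_mul hJ, j_mul hJ, hJe] at h0
    exact h0.symm
  have hexz : ∀ z, e * (x * z) = x * (e * z) := fun z => by
    rw [← mul_assoc, hex, mul_assoc]
  have heJxz : ∀ z, e * (J x * z) = J x * (e * z) := fun z => by
    rw [← mul_assoc, hexJ, mul_assoc]
  have hcomm2 : (J x * x) * e = e * (J x * x) := idem_comm hJ (idem_Jaa hJ x) hee
  have main : ∀ m : ℕ, ∃ f : M, f * f = f ∧ e * f = e ∧ (x * h) ^ (m+1) = x ^ (m+1) * f := by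
    intro m
    induction m with
    | zero => exact ⟨h, hh, heh, by rw [pow_one, pow_one]⟩
    | succ m ih =>
      obtain ⟨f, hf, hef, hfm⟩ := ih
      have hefz : ∀ z, e * (f * z) = e * z := fun z => by rw [← mul_assoc, hef]
      have hcomm : f * (x * J x) = (x * J x) * f := idem_comm hJ hf (idem_aJa hJ x)
      have hfx : f * x = x * (J x * f * x) := by
        calc f * x = f * (x * J x * x) := by rw [hJ.1]
        _ = (f * (x * J x)) * x := by simp only [mul_assoc]
        _ = ((x * J x) * f) * x := by rw [hcomm]
        _ = x * (J x * f * x) := by simp only [mul_assoc]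
      have hgidem : (J x * f * x) * (J x * f * x) = J x * f * x := by
        calc (J x * f * x) * (J x * f * x)
            = J x * ((f * (x * J x)) * (f * x)) := by simp only [mul_assoc]
        _ = J x * (((x * J x) * f) * (f * x)) := by rw [hcomm]
        _ = (J x * x * J x) * ((f * f) * x) := by simp only [mul_assoc]
        _ = J x * (f * x) := by rw [hJ.2.1, hf]
        _ = J x * f * x := by rw [← mul_assoc]
      have hnew : ((J x * f * x) * h) * ((J x * f * x) * h) = (J x * f * x) * h :=
        idem_mul hJ hgidem hh
      have heg : e * ((J x * f * x) * h) = e := by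
        calc e * ((J x * f * x) * h) = e * (J x * (f * (x * h))) := by simp only [mul_assoc]
        _ = J x * (e * (f * (x * h))) := by rw [heJxz]
        _ = J x * (e * (x * h)) := by rw [hefz]
        _ = J x * (x * (e * h)) := by rw [hexz]
        _ = (J x * x) * (e * h) := by rw [← mul_assoc]
        _ = (J x * x) * e := by rw [heh]
        _ = e * (J x * x) := by rw [hcomm2]
        _ = e := heJxx
      refine ⟨(J x * f * x) * h, hnew, heg, ?_⟩
      calc (x*h) ^ (m+2) = (x*h) ^ (m+1) * (x*h) := by rw [pow_succ]
      _ = (x ^ (m+1) * f) * (x * h) := by rw [hfm]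
      _ = x ^ (m+1) * ((f * x) * h) := by simp only [mul_assoc]
      _ = x ^ (m+1) * ((x * (J x * f * x)) * h) := by rw [hfx]
      _ = (x ^ (m+1) * x) * ((J x * f * x) * h) := by simp only [mul_assoc]
      _ = x ^ (m+2) * ((J x * f * x) * h) := by rw [← pow_succ]
  obtain ⟨f, hf, hef, hfK⟩ := main k
  calc (x*h) ^ (k+1) = x ^ (k+1) * f := hfK
  _ = (x ^ (k+1) * e) * f := by rw [hse]
  _ = x ^ (k+1) * (e * f) := by rw [mul_assoc]
  _ = x ^ (k+1) * e := by rw [hef]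
  _ = x ^ (k+1) := hse

theorem trace_step (hJ : IsInverseSemigroup M J) (a : M) (n : ℕ) :
    a * ((J a) ^ (n+1) * a ^ (n+1)) = (J a) ^ n * a ^ (n+1) := by
  have hp : ((J a)^n * a^n) * ((J a)^n * a^n) = (J a)^n * a^n := by
    rw [← j_pow hJ]; exact idem_Jaa hJ (a^n)
  have hcomm : (a * J a) * ((J a)^n * a^n) = ((J a)^n * a^n) * (a * J a) :=
    idem_comm hJ (idem_aJa hJ a) hp
  calc a * ((J a)^(n+1) * a^(n+1))
      = (a * J a) * (((J a)^n * a^n) * a) := by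
        rw [pow_succ' (J a) n, pow_succ a n]; simp only [mul_assoc]
  _ = (((J a)^n * a^n) * (a * J a)) * a := by rw [← mul_assoc, hcomm]
  _ = ((J a)^n * a^n) * (a * J a * a) := by simp only [mul_assoc]
  _ = ((J a)^n * a^n) * a := by rw [hJ.1]
  _ = (J a)^n * a^(n+1) := by rw [mul_assoc, ← pow_succ]

theorem D_abs (hJ : IsInverseSemigroup M J) {x y u v e f : M} {K L : ℕ}
    (hK : 1 ≤ K) (hL : 1 ≤ L) (hx : x = u * v) (hy : y = v * u)
    (hex : MaxGrp e (x ^ K)) (hfy : MaxGrp f (y ^ L)) :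
    ∃ g : M, J g * g = e ∧ g * J g = f ∧ g * x * J g = y * f := by
  set N1 := K + L with hN1
  have hEN1 : MaxGrp e (x ^ N1) := mg_x_pows hK hex _ (Nat.le_add_right _ _)
  have hEN : MaxGrp e (x ^ (N1+1)) := mg_x_pows hK hex _ (by omega)
  have hFN : MaxGrp f (y ^ (N1+1)) := mg_x_pows hL hfy _ (by omega)
  have hJe : J e = e := j_idem hJ (mg_idem hEN)
  have hJf : J f = f := j_idem hJ (mg_idem hFN)
  obtain ⟨t, het, hte, hNt, htN⟩ := hEN.2.2
  obtain ⟨c, hfc, hcf, hNc, hcN⟩ := hFN.2.2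
  have hvx : ∀ n : ℕ, v * x ^ n = y ^ n * v := by
    intro n
    induction n with
    | zero => simp
    | succ n ih =>
      have hv1 : v * x = y * v := by rw [hx, hy, ← mul_assoc]
      calc v * x ^ (n+1) = (v * x ^ n) * x := by rw [pow_succ, ← mul_assoc]
      _ = y ^ n * (v * x) := by rw [ih, mul_assoc]
      _ = y ^ n * (y * v) := by rw [hv1]
      _ = y ^ (n+1) * v := by rw [← mul_assoc, ← pow_succ]
  have hyN : y ^ (N1+1) = v * x ^ N1 * u := by
    calc y ^ (N1+1) = y ^ N1 * (v * u) := by rw [pow_succ, hy]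
    _ = (y ^ N1 * v) * u := by rw [← mul_assoc]
    _ = (v * x ^ N1) * u := by rw [← hvx]
  have hxN : x ^ (N1+1) = x ^ N1 * (u * v) := by rw [pow_succ, hx]
  have hv1 : v * (J v * v) = v := by rw [← mul_assoc, hJ.1]
  have heJvv : e * (J v * v) = e := by
    calc e * (J v * v) = t * x ^ (N1+1) * (J v * v) := by rw [htN]
    _ = t * (x ^ N1 * (u * (v * (J v * v)))) := by rw [hxN]; simp only [mul_assoc]
    _ = t * (x ^ N1 * (u * v)) := by rw [hv1]
    _ = t * x ^ (N1+1) := by rw [← hxN]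
    _ = e := htN
  have hfve : f * (v * e) = v * e := by
    calc f * (v * e) = f * (v * (x ^ (N1+1) * t)) := by rw [hNt]
    _ = (f * (v * x ^ (N1+1))) * t := by simp only [mul_assoc]
    _ = (f * (y ^ (N1+1) * v)) * t := by rw [hvx]
    _ = ((f * y ^ (N1+1)) * v) * t := by simp only [mul_assoc]
    _ = (y ^ (N1+1) * v) * t := by rw [hFN.1]
    _ = (v * x ^ (N1+1)) * t := by rw [← hvx]
    _ = v * (x ^ (N1+1) * t) := by rw [mul_assoc]
    _ = v * e := by rw [hNt]
  have heJvf : e * J v * f = e * J v := by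
    have h0 := congrArg J hfve
    rw [j_mul hJ, j_mul hJ, hJe, hJf] at h0
    exact h0
  have heN1z : ∀ z, e * (x ^ N1 * z) = x ^ N1 * z := fun z => by
    rw [← mul_assoc, hEN1.1]
  have hA : (v * e * J v) * f = v * e * J v := by
    calc (v * e * J v) * f = v * (e * J v * f) := by simp only [mul_assoc]
    _ = v * (e * J v) := by rw [heJvf]
    _ = v * e * J v := by rw [← mul_assoc]
  have hB : (v * e * J v) * f = f := by
    calc (v * e * J v) * f = v * e * J v * (y ^ (N1+1) * c) := by rw [hNc]
    _ = v * ((e * (J v * v)) * (x ^ N1 * (u * c))) := by rw [hyN]; simp only [mul_assoc]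
    _ = v * (e * (x ^ N1 * (u * c))) := by rw [heJvv]
    _ = v * (x ^ N1 * (u * c)) := by rw [heN1z]
    _ = (v * x ^ N1 * u) * c := by simp only [mul_assoc]
    _ = y ^ (N1+1) * c := by rw [← hyN]
    _ = f := hNc
  have hef : v * e * J v = f := hA.symm.trans hB
  have hJg : J (v * e) = e * J v := by rw [j_mul hJ, hJe]
  refine ⟨v * e, ?_, ?_, ?_⟩
  · rw [hJg]
    calc (e * J v) * (v * e) = (e * (J v * v)) * e := by simp only [mul_assoc]
    _ = e * e := by rw [heJvv]
    _ = e := mg_idem hEN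
  · rw [hJg]
    calc (v * e) * (e * J v) = v * ((e * e) * J v) := by simp only [mul_assoc]
    _ = v * (e * J v) := by rw [mg_idem hEN]
    _ = f := by rw [← mul_assoc]; exact hef
  · rw [hJg]
    have hexe : e * x = x * e := mg_comm hex (pow_comm_self x K)
    have hvxy : v * x = y * v := by rw [hx, hy, ← mul_assoc]
    calc (v * e) * x * (e * J v) = v * ((e * x) * (e * J v)) := by simp only [mul_assoc]
    _ = v * ((x * e) * (e * J v)) := by rw [hexe]
    _ = (v * x) * ((e * e) * J v) := by simp only [mul_assoc]
    _ = (y * v) * (e * J v) := by rw [hvxy, mg_idem hEN]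
    _ = y * (v * e * J v) := by simp only [mul_assoc]
    _ = y * f := by rw [hef]
end Abstract

section Transfer
variable {S : Type*} [Semigroup S] {inv : S → S}

theorem inv₁_one : inv₁ inv (1 : WithOne S) = 1 := by
  unfold inv₁; exact dif_pos rfl

theorem inv₁_coe (s : S) : inv₁ inv (s : WithOne S) = ((inv s : S) : WithOne S) := by
  unfold inv₁
  rw [dif_neg WithOne.coe_ne_one, WithOne.unone_coe]

theorem isInvSg_one (hinv : IsInverseSemigroup S inv) :
    IsInverseSemigroup (WithOne S) (inv₁ inv) := by
  refine ⟨?_, ?_, ?_⟩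
  · intro a
    induction a using WithOne.recOneCoe with
    | one => rw [inv₁_one, mul_one, mul_one]
    | coe s =>
      rw [inv₁_coe, ← WithOne.coe_mul, ← WithOne.coe_mul]
      exact WithOne.coe_inj.2 (hinv.1 s)
  · intro a
    induction a using WithOne.recOneCoe with
    | one => rw [inv₁_one, mul_one, mul_one]
    | coe s =>
      rw [inv₁_coe, ← WithOne.coe_mul, ← WithOne.coe_mul]
      exact WithOne.coe_inj.2 (hinv.2.1 s)
  · intro a b h1 h2
    induction a using WithOne.recOneCoe with
    | one =>
      rw [inv₁_one]
      rw [one_mul, mul_one] at h1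
      exact h1
    | coe s =>
      induction b using WithOne.recOneCoe with
      | one =>
        rw [one_mul, mul_one] at h2
        exact absurd h2 WithOne.coe_ne_one
      | coe t =>
        rw [← WithOne.coe_mul, ← WithOne.coe_mul] at h1 h2
        rw [inv₁_coe]
        exact WithOne.coe_inj.2
          (hinv.2.2 s t (WithOne.coe_inj.1 h1) (WithOne.coe_inj.1 h2))

theorem coe_spow (x : S) : ∀ k : ℕ, ((spow x k : S) : WithOne S) = (x : WithOne S) ^ (k+1)
  | 0 => by rw [pow_one]; rfl
  | k+1 => by
    show ((spow x k * x : S) : WithOne S) = _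
    rw [WithOne.coe_mul, coe_spow x k, ← pow_succ]

theorem maxGrp_coe {e a : S} (h : InMaxSubgroup e a) :
    MaxGrp (e : WithOne S) (a : WithOne S) := by
  obtain ⟨h1, h2, b, h3, h4, h5, h6⟩ := h
  refine ⟨?_, ?_, (b : WithOne S), ?_, ?_, ?_, ?_⟩ <;>
    rw [← WithOne.coe_mul] <;> exact WithOne.coe_inj.2 ‹_›

theorem eidem_mg {x e : S} (h : IsEIdem x e) :
    ∃ k : ℕ, MaxGrp (e : WithOne S) ((x : WithOne S) ^ (k+1)) := by
  obtain ⟨k, hk⟩ := h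
  exact ⟨k, by rw [← coe_spow]; exact maxGrp_coe hk⟩

theorem eidem_idem {x e : S} (h : IsEIdem x e) : e * e = e := by
  obtain ⟨k, h1, h2, b, h3, h4, h5, h6⟩ := h
  calc e * e = e * (spow x k * b) := by rw [h5]
  _ = (e * spow x k) * b := by rw [← mul_assoc]
  _ = e := by rw [h1, h5]

end Transfer

section SLevel
variable {S : Type*} [Semigroup S] {inv : S → S}

theorem sgConj_refl (x : S) : SgConj x x :=
  Relation.TransGen.single ⟨1, (x : WithOne S), by rw [one_mul], by rw [mul_one]⟩

theorem sgConj_symm {x y : S} (h : SgConj x y) : SgConj y x := by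
  induction h with
  | single h => obtain ⟨u, v, h1, h2⟩ := h; exact Relation.TransGen.single ⟨v, u, h2, h1⟩
  | tail _ h ih =>
    obtain ⟨u, v, h1, h2⟩ := h
    exact Relation.TransGen.trans (Relation.TransGen.single ⟨v, u, h2, h1⟩) ih

theorem sgConj_w_we (hinv : IsInverseSemigroup S inv) {w e : S}
    (hE : IsEIdem w e) : SgConj w (w * e) := by
  have hJ : IsInverseSemigroup (WithOne S) (inv₁ inv) := isInvSg_one hinv
  obtain ⟨k, hmax⟩ := hE
  have hmgM : MaxGrp ((e : WithOne S)) ((w : WithOne S) ^ (k+1)) := by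
    have h0 := maxGrp_coe (S := S) hmax
    rwa [coe_spow] at h0
  have coeR : ∀ n : ℕ, ((spow (inv w) n * spow w (n+1) : S) : WithOne S)
      = (inv₁ inv (w : WithOne S)) ^ (n+1) * ((w : WithOne S)) ^ (n+2) := by
    intro n
    rw [WithOne.coe_mul, coe_spow, coe_spow, ← inv₁_coe]
  have step0 : PrimConj w (spow (inv w) 0 * spow w 1) := by
    refine ⟨(w : WithOne S), ((inv w * w : S) : WithOne S), ?_, ?_⟩
    · rw [← WithOne.coe_mul]
      exact (WithOne.coe_inj.2 (by rw [← mul_assoc, hinv.1])).symm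
    · rw [← WithOne.coe_mul]
      refine WithOne.coe_inj.2 ?_
      show spow (inv w) 0 * spow w 1 = _
      show (inv w) * (spow w 0 * w) = _
      show (inv w) * (w * w) = _
      rw [← mul_assoc]
  have stepn : ∀ n : ℕ, PrimConj (spow (inv w) n * spow w (n+1))
      (spow (inv w) (n+1) * spow w (n+2)) := by
    intro n
    refine ⟨(w : WithOne S), ((spow (inv w) (n+1) * spow w (n+1) : S) : WithOne S), ?_, ?_⟩
    · rw [coeR, WithOne.coe_mul, coe_spow, coe_spow, ← inv₁_coe]
      exact (trace_step hJ ((w : WithOne S)) (n+1)).symm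
    · rw [coeR, WithOne.coe_mul, coe_spow, coe_spow, ← inv₁_coe]
      rw [mul_assoc, ← pow_succ]
  have chain : ∀ n : ℕ, SgConj w (spow (inv w) n * spow w (n+1)) := by
    intro n
    induction n with
    | zero => exact Relation.TransGen.single step0
    | succ n ih => exact Relation.TransGen.tail ih (stepn n)
  have final : spow (inv w) k * spow w (k+1) = w * e := by
    apply WithOne.coe_inj.1
    rw [coeR, WithOne.coe_mul]
    obtain ⟨hes, hse, t, het, hte, hst, hts⟩ := hmgM
    have h1 : (w : WithOne S) ^ (k+1) * t * (w : WithOne S) ^ (k+1)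
        = (w : WithOne S) ^ (k+1) := by rw [hst, hes]
    have h2 : t * (w : WithOne S) ^ (k+1) * t = t := by rw [hts, het]
    have ht : t = inv₁ inv ((w : WithOne S) ^ (k+1)) := inv_unique hJ h1 h2
    have hJa : inv₁ inv ((w : WithOne S)) ^ (k+1) * (w : WithOne S) ^ (k+1)
        = (e : WithOne S) := by rw [← j_pow hJ, ← ht, hts]
    calc inv₁ inv ((w : WithOne S)) ^ (k+1) * (w : WithOne S) ^ (k+2)
        = inv₁ inv ((w : WithOne S)) ^ (k+1) * ((w : WithOne S) ^ (k+1) * (w : WithOne S)) := by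
          rw [← pow_succ]
    _ = (inv₁ inv ((w : WithOne S)) ^ (k+1) * (w : WithOne S) ^ (k+1)) * (w : WithOne S) := by
          rw [← mul_assoc]
    _ = (e : WithOne S) * (w : WithOne S) := by rw [hJa]
    _ = (w : WithOne S) * (e : WithOne S) := mg_comm ⟨hes, hse, t, het, hte, hst, hts⟩
          (pow_comm_self _ _)
  rw [← final]
  exact chain k

theorem actsTo_sgConj (hinv : IsInverseSemigroup S inv) {a : WithOne S} {x y : S}
    (h : ActsTo inv a x y) : SgConj x y := by
  have hJ : IsInverseSemigroup (WithOne S) (inv₁ inv) := isInvSg_one hinv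
  obtain ⟨⟨e, hE, hNat⟩, hval⟩ := h
  induction a using WithOne.recOneCoe with
  | one =>
    rw [inv₁_one, mul_one, one_mul] at hval
    rw [WithOne.coe_inj.1 hval]
    exact sgConj_refl x
  | coe c =>
    rw [inv₁_coe] at hval
    obtain ⟨f1, hf1, hef⟩ := hNat
    rw [inv₁_coe, ← WithOne.coe_mul] at hef
    set h₀ : S := inv c * c with hh₀
    have hh₀i : h₀ * h₀ = h₀ := by
      rw [hh₀, ← mul_assoc]
      rw [show inv c * c * inv c = inv c from hinv.2.1 c]
    have hh₀iM : ((h₀ : S) : WithOne S) * ((h₀ : S) : WithOne S) = ((h₀ : S) : WithOne S) := by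
      rw [← WithOne.coe_mul, hh₀i]
    have hehM : ((e : S) : WithOne S) * ((h₀ : S) : WithOne S) = ((e : S) : WithOne S) := by
      calc ((e : S) : WithOne S) * (h₀ : WithOne S)
          = ((h₀ : WithOne S) * f1) * (h₀ : WithOne S) := by rw [← hef]
      _ = (h₀ : WithOne S) * (f1 * (h₀ : WithOne S)) := by rw [mul_assoc]
      _ = (h₀ : WithOne S) * ((h₀ : WithOne S) * f1) := by
            rw [idem_comm hJ hf1 hh₀iM]
      _ = ((h₀ : WithOne S) * (h₀ : WithOne S)) * f1 := by rw [← mul_assoc]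
      _ = (h₀ : WithOne S) * f1 := by rw [hh₀iM]
      _ = ((e : S) : WithOne S) := hef.symm
    have hheM : ((h₀ : S) : WithOne S) * ((e : S) : WithOne S) = ((e : S) : WithOne S) := by
      calc ((h₀ : S) : WithOne S) * (e : WithOne S)
          = (h₀ : WithOne S) * ((h₀ : WithOne S) * f1) := by rw [← hef]
      _ = ((h₀ : WithOne S) * (h₀ : WithOne S)) * f1 := by rw [← mul_assoc]
      _ = (h₀ : WithOne S) * f1 := by rw [hh₀iM]
      _ = (e : WithOne S) := hef.symm
    have hheS : h₀ * e = e := WithOne.coe_inj.1 (by rw [WithOne.coe_mul, hheM])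
    obtain ⟨k, hmax⟩ := hE
    have hmgM : MaxGrp ((e : WithOne S)) ((x : WithOne S) ^ (k+1)) := by
      have h0 := maxGrp_coe (S := S) hmax
      rwa [coe_spow] at h0
    have hlemB : (((x : WithOne S)) * (h₀ : WithOne S)) ^ (k+1) = (x : WithOne S) ^ (k+1) :=
      lemB hJ (Nat.succ_le_succ (Nat.zero_le k)) hmgM hh₀iM hehM
    have hspow : spow (x * h₀) k = spow x k := by
      apply WithOne.coe_inj.1
      rw [coe_spow, coe_spow, WithOne.coe_mul, hlemB]
    have hE2 : IsEIdem (x * h₀) e := ⟨k, by rw [hspow]; exact hmax⟩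
    have c1 : PrimConj y (x * h₀) := by
      refine ⟨(c : WithOne S), ((x * inv c : S) : WithOne S), ?_, ?_⟩
      · rw [WithOne.coe_mul, ← mul_assoc]
        exact hval
      · rw [hh₀, WithOne.coe_mul, WithOne.coe_mul, WithOne.coe_mul, ← mul_assoc]
    have t1 : SgConj y (x * h₀) := Relation.TransGen.single c1
    have t2 : SgConj (x * h₀) (x * h₀ * e) := sgConj_w_we hinv hE2
    have t2' : x * h₀ * e = x * e := by rw [mul_assoc, hheS]
    rw [t2'] at t2
    have t3 : SgConj x (x * e) := sgConj_w_we hinv ⟨k, hmax⟩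
    exact sgConj_symm (Relation.TransGen.trans (Relation.TransGen.trans t1 t2)
      (sgConj_symm t3))

def DRel (inv : S → S) (x y : S) : Prop :=
  ∃ e f : S, IsEIdem x e ∧ IsEIdem y f ∧
    ∃ g : WithOne S, inv₁ inv g * g = (e : WithOne S) ∧
      g * inv₁ inv g = (f : WithOne S) ∧
      g * (x : WithOne S) * inv₁ inv g = (y : WithOne S) * (f : WithOne S)

theorem d_of_prim (hinv : IsInverseSemigroup S inv) (hGB : GroupBound S) {x y : S}
    (h : PrimConj x y) : DRel inv x y := by
  have hJ : IsInverseSemigroup (WithOne S) (inv₁ inv) := isInvSg_one hinv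
  obtain ⟨u, v, hx, hy⟩ := h
  obtain ⟨e, hxe⟩ := hGB x
  obtain ⟨f, hyf⟩ := hGB y
  obtain ⟨k, hk⟩ := eidem_mg (S := S) hxe
  obtain ⟨l, hl⟩ := eidem_mg (S := S) hyf
  obtain ⟨g, h1, h2, h3⟩ := D_abs hJ (Nat.succ_le_succ (Nat.zero_le k))
    (Nat.succ_le_succ (Nat.zero_le l)) hx hy hk hl
  exact ⟨e, f, hxe, hyf, g, h1, h2, h3⟩

theorem eid_unique_S (hinv : IsInverseSemigroup S inv) {y f f₂ : S}
    (h : IsEIdem y f) (h' : IsEIdem y f₂) : f = f₂ := by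
  have hJ : IsInverseSemigroup (WithOne S) (inv₁ inv) := isInvSg_one hinv
  obtain ⟨l, hl⟩ := eidem_mg (S := S) h
  obtain ⟨l', hl'⟩ := eidem_mg (S := S) h'
  exact WithOne.coe_inj.1 (eid_unique_abs hJ (Nat.succ_le_succ (Nat.zero_le l))
    (Nat.succ_le_succ (Nat.zero_le l')) hl hl')

theorem d_trans (hinv : IsInverseSemigroup S inv) {x y w : S}
    (hxy : DRel inv x y) (hyw : DRel inv y w) : DRel inv x w := by
  have hJ : IsInverseSemigroup (WithOne S) (inv₁ inv) := isInvSg_one hinv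
  obtain ⟨e, f, hxe, hyf, g, hg1, hg2, hg3⟩ := hxy
  obtain ⟨f₂, f', hyf₂, hwf', g', hg1', hg2', hg3'⟩ := hyw
  have hff : f₂ = f := eid_unique_S hinv hyf₂ hyf
  subst hff
  refine ⟨e, f', hxe, hwf', g' * g, ?_, ?_, ?_⟩
  · rw [j_mul hJ]
    calc (inv₁ inv g * inv₁ inv g') * (g' * g)
        = inv₁ inv g * ((inv₁ inv g' * g') * g) := by simp only [mul_assoc]
    _ = inv₁ inv g * ((f₂ : WithOne S) * g) := by rw [hg1']
    _ = inv₁ inv g * ((g * inv₁ inv g) * g) := by rw [← hg2]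
    _ = (inv₁ inv g * g) * (inv₁ inv g * g) := by simp only [mul_assoc]
    _ = (e : WithOne S) * (e : WithOne S) := by rw [hg1]
    _ = (e : WithOne S) := by rw [← WithOne.coe_mul, eidem_idem hxe]
  · rw [j_mul hJ]
    calc (g' * g) * (inv₁ inv g * inv₁ inv g')
        = g' * ((g * inv₁ inv g) * inv₁ inv g') := by simp only [mul_assoc]
    _ = g' * ((f₂ : WithOne S) * inv₁ inv g') := by rw [hg2]
    _ = g' * ((inv₁ inv g' * g') * inv₁ inv g') := by rw [← hg1']
    _ = g' * (inv₁ inv g' * g' * inv₁ inv g') := rfl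
    _ = g' * inv₁ inv g' := by rw [hJ.2.1]
    _ = (f' : WithOne S) := hg2'
  · rw [j_mul hJ]
    calc (g' * g) * (x : WithOne S) * (inv₁ inv g * inv₁ inv g')
        = g' * ((g * (x : WithOne S) * inv₁ inv g) * inv₁ inv g') := by
          simp only [mul_assoc]
    _ = g' * (((y : WithOne S) * (f₂ : WithOne S)) * inv₁ inv g') := by rw [hg3]
    _ = g' * (((y : WithOne S) * (inv₁ inv g' * g')) * inv₁ inv g') := by rw [← hg1']
    _ = (g' * (y : WithOne S) * inv₁ inv g') * (g' * inv₁ inv g') := by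
          simp only [mul_assoc]
    _ = ((w : WithOne S) * (f' : WithOne S)) * (f' : WithOne S) := by rw [hg3', hg2']
    _ = (w : WithOne S) * ((f' : WithOne S) * (f' : WithOne S)) := by rw [mul_assoc]
    _ = (w : WithOne S) * (f' : WithOne S) := by rw [← WithOne.coe_mul, eidem_idem hwf']

theorem c_of_d (hinv : IsInverseSemigroup S inv) {x y : S} (h : DRel inv x y) :
    ∃ z : S, ∃ a b : WithOne S, ActsTo inv a x z ∧ ActsTo inv b y z := by
  have hJ : IsInverseSemigroup (WithOne S) (inv₁ inv) := isInvSg_one hinv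
  obtain ⟨e, f, hxe, hyf, g, hg1, hg2, hg3⟩ := h
  have hee : e * e = e := eidem_idem hxe
  have hff : f * f = f := eidem_idem hyf
  have hinv_e : inv e = e := (hinv.2.2 e e (by rw [hee, hee]) (by rw [hee, hee])).symm
  obtain ⟨k, hmgM⟩ := eidem_mg (S := S) hxe
  have hexe : (e : WithOne S) * (x : WithOne S) = (x : WithOne S) * (e : WithOne S) :=
    mg_comm hmgM (pow_comm_self _ _)
  have heeM : (e : WithOne S) * (e : WithOne S) = (e : WithOne S) := by
    rw [← WithOne.coe_mul, hee]
  have hffM : (f : WithOne S) * (f : WithOne S) = (f : WithOne S) := by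
    rw [← WithOne.coe_mul, hff]
  refine ⟨x * e, (e : WithOne S), inv₁ inv g, ⟨⟨e, hxe, ?_⟩, ?_⟩, ⟨⟨f, hyf, ?_⟩, ?_⟩⟩
  · refine ⟨(e : WithOne S), heeM, ?_⟩
    rw [inv₁_coe, hinv_e, heeM, heeM]
  · rw [inv₁_coe, hinv_e, WithOne.coe_mul]
    calc ((x : WithOne S) * (e : WithOne S))
        = (x : WithOne S) * ((e : WithOne S) * (e : WithOne S)) := by rw [heeM]
    _ = ((x : WithOne S) * (e : WithOne S)) * (e : WithOne S) := by rw [← mul_assoc]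
    _ = ((e : WithOne S) * (x : WithOne S)) * (e : WithOne S) := by rw [hexe]
  · refine ⟨(f : WithOne S), hffM, ?_⟩
    rw [j_invol hJ g, hg2, hffM]
  · rw [j_invol hJ g, WithOne.coe_mul]
    have hge : g * (e : WithOne S) = g := by
      rw [← hg1, ← mul_assoc, hJ.1]
    have hfg : (f : WithOne S) * g = g := by
      rw [← hg2]; exact hJ.1 g
    calc ((x : WithOne S) * (e : WithOne S))
        = ((inv₁ inv g * g) * ((x : WithOne S) * (inv₁ inv g * g))) := by
          rw [hg1, ← mul_assoc, hexe, mul_assoc, heeM]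
    _ = inv₁ inv g * ((g * (x : WithOne S) * inv₁ inv g) * g) := by simp only [mul_assoc]
    _ = inv₁ inv g * (((y : WithOne S) * (f : WithOne S)) * g) := by rw [hg3]
    _ = inv₁ inv g * ((y : WithOne S) * ((f : WithOne S) * g)) := by
          simp only [mul_assoc]
    _ = inv₁ inv g * ((y : WithOne S) * g) := by rw [hfg]
    _ = inv₁ inv g * (y : WithOne S) * g := by rw [← mul_assoc]

end SLevel

/-- Theorem 2: in a group-bound inverse semigroup the following are
equivalent: (a) `x ∼ y`; (b) `x ≈ y`; (c) `a · x = z = b · y` for some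
`z ∈ S` and `a, b ∈ S¹`. -/
theorem conj_iff_actConj {S : Type*} [Semigroup S] (inv : S → S)
    (hinv : IsInverseSemigroup S inv) (hGB : GroupBound S) (x y : S) :
    (SgConj x y ↔ ActConj inv x y) ∧
    (SgConj x y ↔ ∃ z : S, ∃ a b : WithOne S, ActsTo inv a x z ∧ ActsTo inv b y z) := by
  have hd : ∀ {a b : S}, SgConj a b → DRel inv a b := by
    intro a b h
    induction h with
    | single hp => exact d_of_prim hinv hGB hp
    | tail _ hp ih => exact d_trans hinv ih (d_of_prim hinv hGB hp)
  have hact : ∀ {a b : S}, ActConjP inv a b → SgConj a b := by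
    rintro a b ⟨c, h | h⟩
    · exact actsTo_sgConj hinv h
    · exact sgConj_symm (actsTo_sgConj hinv h)
  constructor
  · constructor
    · intro h
      obtain ⟨z, a, b, haz, hbz⟩ := c_of_d hinv (hd h)
      exact Relation.TransGen.tail (Relation.TransGen.single ⟨a, Or.inl haz⟩)
        ⟨b, Or.inr hbz⟩
    · intro h
      induction h with
      | single hp => exact hact hp
      | tail _ hp ih => exact Relation.TransGen.trans ih (hact hp)
  · constructor
    · intro h
      exact c_of_d hinv (hd h)
    · rintro ⟨z, a, b, haz, hbz⟩
      exact Relation.TransGen.trans (actsTo_sgConj hinv haz)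
        (sgConj_symm (actsTo_sgConj hinv hbz))

end SgConjPaper
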